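/- Let H and I be Hilbert spaces, m, n positive integers, and T : H^{⊕m} → I^{⊕n} a bounded linear operator with block components T_{i,j} = Q_i ∘ T ∘ R_j^* where Q_i : I^{⊕n} → I and R_j : H^{⊕m} → H are the coordinate projections. Then the operator norm of T satisfies ‖T‖ ≤ (∑_{i=1}^{n} ‖∑_{j=1}^{m} T_{i,j} T_{i,j}^*‖)^{1/2}. -/
import Mathlib


open scoped ComplexConjugate

section Aux

variable {H I : Type*} [NormedAddCommGroup H] [InnerProductSpace ℂ H] [CompleteSpace H]
    [NormedAddCommGroup I] [InnerProductSpace ℂ I] [CompleteSpace I]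

local notation "⟪" x ", " y "⟫" => @inner ℂ _ _ x y

lemma row_sq_le (m : ℕ) (A : Fin m → (H →L[ℂ] I)) (v : Fin m → H) :
    ‖∑ j, A j (v j)‖ ^ 2 ≤ ‖∑ j, A j ∘L (A j).adjoint‖ * ∑ j, ‖v j‖ ^ 2 := by
  set w : I := ∑ j, A j (v j) with hw
  set M : ℝ := ‖∑ j, A j ∘L (A j).adjoint‖ with hM
  have hM0 : 0 ≤ M := norm_nonneg _
  -- Step 1: ∑ j, ‖(A j)† w‖² ≤ M * ‖w‖²
  have h1 : ∑ j, ‖(A j).adjoint w‖ ^ 2 ≤ M * ‖w‖ ^ 2 := by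
    have : ∑ j, ‖(A j).adjoint w‖ ^ 2
        = RCLike.re ⟪(∑ j, A j ∘L (A j).adjoint) w, w⟫ := by
      rw [ContinuousLinearMap.sum_apply, sum_inner, map_sum]
      refine Finset.sum_congr rfl fun j _ => ?_
      rw [ContinuousLinearMap.comp_apply, ← ContinuousLinearMap.adjoint_inner_right,
        inner_self_eq_norm_sq]
    rw [this]
    calc RCLike.re ⟪(∑ j, A j ∘L (A j).adjoint) w, w⟫
        ≤ ‖⟪(∑ j, A j ∘L (A j).adjoint) w, w⟫‖ := RCLike.re_le_norm _
      _ ≤ ‖(∑ j, A j ∘L (A j).adjoint) w‖ * ‖w‖ := norm_inner_le_norm _ _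
      _ ≤ (M * ‖w‖) * ‖w‖ := by
          gcongr
          exact ContinuousLinearMap.le_opNorm _ _
      _ = M * ‖w‖ ^ 2 := by ring
  -- Step 2: ‖w‖² ≤ sqrt(∑ ‖v j‖²) * sqrt(∑ ‖(A j)† w‖²)
  have h2 : ‖w‖ ^ 2 ≤ Real.sqrt (∑ j, ‖v j‖ ^ 2) * Real.sqrt (∑ j, ‖(A j).adjoint w‖ ^ 2) := by
    have hww : (‖w‖ : ℝ) ^ 2 = RCLike.re ⟪w, w⟫ := by
      rw [inner_self_eq_norm_sq]
    have hsum : RCLike.re ⟪w, w⟫ = ∑ j, RCLike.re ⟪v j, (A j).adjoint w⟫ := by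
      conv_lhs => rw [hw]
      rw [sum_inner, map_sum]
      refine Finset.sum_congr rfl fun j _ => ?_
      rw [ContinuousLinearMap.adjoint_inner_right]
    have hCS : ∑ j, RCLike.re ⟪v j, (A j).adjoint w⟫
        ≤ ∑ j, ‖v j‖ * ‖(A j).adjoint w‖ := by
      refine Finset.sum_le_sum fun j _ => ?_
      calc RCLike.re ⟪v j, (A j).adjoint w⟫ ≤ ‖⟪v j, (A j).adjoint w⟫‖ := RCLike.re_le_norm _
        _ ≤ ‖v j‖ * ‖(A j).adjoint w‖ := norm_inner_le_norm _ _
    have hCS2 : ∑ j, ‖v j‖ * ‖(A j).adjoint w‖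
        ≤ Real.sqrt (∑ j, ‖v j‖ ^ 2) * Real.sqrt (∑ j, ‖(A j).adjoint w‖ ^ 2) := by
      have hcs := Finset.sum_mul_sq_le_sq_mul_sq Finset.univ
        (fun j => ‖v j‖) (fun j => ‖(A j).adjoint w‖)
      have hnn : (0:ℝ) ≤ ∑ j, ‖v j‖ * ‖(A j).adjoint w‖ :=
        Finset.sum_nonneg fun j _ => mul_nonneg (norm_nonneg _) (norm_nonneg _)
      calc ∑ j, ‖v j‖ * ‖(A j).adjoint w‖
          = Real.sqrt ((∑ j, ‖v j‖ * ‖(A j).adjoint w‖) ^ 2) :=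
            (Real.sqrt_sq hnn).symm
        _ ≤ Real.sqrt ((∑ j, ‖v j‖ ^ 2) * ∑ j, ‖(A j).adjoint w‖ ^ 2) :=
            Real.sqrt_le_sqrt hcs
        _ = _ := Real.sqrt_mul (by positivity) _
    calc ‖w‖ ^ 2 = ∑ j, RCLike.re ⟪v j, (A j).adjoint w⟫ := by rw [hww, hsum]
      _ ≤ _ := le_trans hCS hCS2
  -- combine
  have h3 : ‖w‖ ^ 2 ≤ Real.sqrt (∑ j, ‖v j‖ ^ 2) * (Real.sqrt M * ‖w‖) := by
    refine h2.trans (mul_le_mul_of_nonneg_left ?_ (Real.sqrt_nonneg _))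
    calc Real.sqrt (∑ j, ‖(A j).adjoint w‖ ^ 2) ≤ Real.sqrt (M * ‖w‖ ^ 2) :=
            Real.sqrt_le_sqrt h1
        _ = Real.sqrt M * ‖w‖ := by
            rw [Real.sqrt_mul hM0, Real.sqrt_sq (norm_nonneg _)]
  clear_value w M
  rcases eq_or_ne ‖w‖ 0 with h0 | h0
  · rw [h0]
    have : (0:ℝ) ≤ ∑ j, ‖v j‖ ^ 2 := by positivity
    nlinarith
  · have hwpos : 0 < ‖w‖ := lt_of_le_of_ne (norm_nonneg _) (Ne.symm h0)
    have h4 : ‖w‖ ≤ Real.sqrt (∑ j, ‖v j‖ ^ 2) * Real.sqrt M := by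
      have := h3
      rw [pow_two] at this
      nlinarith
    calc ‖w‖ ^ 2 ≤ (Real.sqrt (∑ j, ‖v j‖ ^ 2) * Real.sqrt M) ^ 2 :=
          pow_le_pow_left₀ (norm_nonneg w) h4 2
      _ = M * ∑ j, ‖v j‖ ^ 2 := by
          have e1 : Real.sqrt (∑ j, ‖v j‖ ^ 2) ^ 2 = ∑ j, ‖v j‖ ^ 2 :=
            Real.sq_sqrt (by positivity)
          have e2 : Real.sqrt M ^ 2 = M := Real.sq_sqrt hM0
          rw [mul_pow, e1, e2, mul_comm]

end Aux

/-- Block operator-norm bound: if `T : H^{⊕m} →L I^{⊕n}` has block components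
`Tij i j`, then `‖T‖ ≤ (∑ i, ‖∑ j, Tij i j ∘ (Tij i j)*‖)^{1/2}`. -/
theorem block_opNorm_le
    {H I : Type*} [NormedAddCommGroup H] [InnerProductSpace ℂ H] [CompleteSpace H]
    [NormedAddCommGroup I] [InnerProductSpace ℂ I] [CompleteSpace I]
    (m n : ℕ) (hm : 0 < m) (hn : 0 < n)
    (T : PiLp 2 (fun _ : Fin m => H) →L[ℂ] PiLp 2 (fun _ : Fin n => I))
    (Tij : Fin n → Fin m → (H →L[ℂ] I))
    (hblock : ∀ (v : PiLp 2 (fun _ : Fin m => H)) (i : Fin n),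
      T v i = ∑ j, Tij i j (v j)) :
    ‖T‖ ≤ Real.sqrt (∑ i, ‖∑ j, Tij i j ∘L (Tij i j).adjoint‖) := by
  refine T.opNorm_le_bound (Real.sqrt_nonneg _) fun v => ?_
  have hv : ‖v‖ ^ 2 = ∑ j, ‖v j‖ ^ 2 := PiLp.norm_sq_eq_of_L2 _ v
  have hTv : ‖T v‖ ^ 2 = ∑ i, ‖T v i‖ ^ 2 := PiLp.norm_sq_eq_of_L2 _ (T v)
  have key : ‖T v‖ ^ 2 ≤ (∑ i, ‖∑ j, Tij i j ∘L (Tij i j).adjoint‖) * ‖v‖ ^ 2 := by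
    rw [hTv, Finset.sum_mul]
    refine Finset.sum_le_sum fun i _ => ?_
    rw [hblock v i, hv]
    exact row_sq_le m (Tij i) (fun j => v j)
  have h1 : ‖T v‖ = Real.sqrt (‖T v‖ ^ 2) := (Real.sqrt_sq (norm_nonneg _)).symm
  rw [h1]
  calc Real.sqrt (‖T v‖ ^ 2)
      ≤ Real.sqrt ((∑ i, ‖∑ j, Tij i j ∘L (Tij i j).adjoint‖) * ‖v‖ ^ 2) :=
        Real.sqrt_le_sqrt key
    _ = Real.sqrt (∑ i, ‖∑ j, Tij i j ∘L (Tij i j).adjoint‖) * ‖v‖ := by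
        rw [Real.sqrt_mul (by positivity), Real.sqrt_sq (norm_nonneg _)]
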